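/- Let g and h be nonzero 0/±1 vectors on the edges of a simple graph G such that the vertex sets spanned by supp(g) and supp(h) are disjoint, g has only negative entries, and h has only positive entries. Then z = g + h is a circuit of the rank-inequality system (Rank): any nonzero y with supp(By) ⊊ supp(Bz) is a scalar multiple of z, which is impossible. -/

import Mathlib

/-- The row of the rank-inequality matrix indexed by `U ⊆ V`, applied to `g`:
`∑_{e ∈ E(G[U])} g(e)`. -/
def rowSum {V : Type*} [Fintype V] [DecidableEq V] (G : SimpleGraph V) [DecidableRel G.Adj]
    (g : G.edgeSet → ℝ) (U : Finset V) : ℝ :=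
  ∑ e : G.edgeSet, if ∀ v ∈ (e : Sym2 V), v ∈ U then g e else 0

/-- The support of `B g` for the rank-inequality matrix `B`: the nonempty sets `U` whose
rank row evaluates to a nonzero value on `g`. -/
def Bsupp {V : Type*} [Fintype V] [DecidableEq V] (G : SimpleGraph V) [DecidableRel G.Adj]
    (g : G.edgeSet → ℝ) : Set (Finset V) :=
  {U | U.Nonempty ∧ rowSum G g U ≠ 0}

/-- A circuit of the rank-inequality system: a nonzero vector `g` such that `B g` is
support-minimal over `{B x : x ≠ 0}`. -/
def IsCircuit {V : Type*} [Fintype V] [DecidableEq V] (G : SimpleGraph V) [DecidableRel G.Adj]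
    (g : G.edgeSet → ℝ) : Prop :=
  g ≠ 0 ∧ ∀ y : G.edgeSet → ℝ, y ≠ 0 → ¬ Bsupp G y ⊂ Bsupp G g

/-- The unit vector supported on the edge `e`. -/
def unitVec {V : Type*} [DecidableEq V] (G : SimpleGraph V) (e : G.edgeSet) :
    G.edgeSet → ℝ :=
  fun f => if f = e then 1 else 0

/-- The spanning subgraph of `G` with edge set `R`. -/
def edgeSub {V : Type*} (G : SimpleGraph V) (R : Set G.edgeSet) : SimpleGraph V where
  Adj u v := u ≠ v ∧ ∃ e ∈ R, (e : Sym2 V) = s(u, v)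
  symm := by
    refine ⟨?_⟩
    rintro u v ⟨huv, e, heR, he⟩
    exact ⟨huv.symm, e, heR, by rw [he, Sym2.eq_swap]⟩
  loopless := ⟨by rintro v ⟨hv, _⟩; exact hv rfl⟩

namespace Stmt19Aux

variable {V : Type*} [Fintype V] [DecidableEq V] (G : SimpleGraph V) [DecidableRel G.Adj]

lemma sym2_subset_eq : ∀ e f : Sym2 V, ¬ e.IsDiag → ¬ f.IsDiag →
    (∀ w ∈ f, w ∈ e) → f = e := by
  intro e
  induction e using Sym2.inductionOn with
  | hf a b =>
    intro f
    induction f using Sym2.inductionOn with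
    | hf c d =>
      intro he hf hsub
      rw [Sym2.mk_isDiag_iff] at he hf
      have hc := hsub c (by simp)
      have hd := hsub d (by simp)
      rw [Sym2.mem_iff] at hc hd
      rcases hc with rfl | rfl <;> rcases hd with rfl | rfl <;>
        simp_all [Sym2.eq_swap]

lemma edge_eq (e f : G.edgeSet) (hsub : ∀ w ∈ (f : Sym2 V), w ∈ (e : Sym2 V)) :
    f = e :=
  Subtype.ext (sym2_subset_eq (e : Sym2 V) (f : Sym2 V)
    (G.not_isDiag_of_mem_edgeSet e.2) (G.not_isDiag_of_mem_edgeSet f.2) hsub)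

lemma rowSum_pair (y : G.edgeSet → ℝ) (e : G.edgeSet) :
    rowSum G y (Finset.univ.filter (· ∈ (e : Sym2 V))) = y e := by
  unfold rowSum
  rw [Finset.sum_eq_single e]
  · rw [if_pos]
    intro v hv
    simp [hv]
  · intro f _ hfe
    rw [if_neg]
    intro hall
    exact hfe (edge_eq G e f (fun w hw => by simpa using hall w hw))
  · simp

lemma rowSum_smul (c : ℝ) (y : G.edgeSet → ℝ) (U : Finset V) :
    rowSum G (fun e => c * y e) U = c * rowSum G y U := by
  unfold rowSum
  rw [Finset.mul_sum]
  refine Finset.sum_congr rfl fun e _ => ?_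
  split <;> simp

end Stmt19Aux

/-- Case 1 of the disconnected-circuits lemma. -/
theorem stmt19 {V : Type*} [Fintype V] [DecidableEq V] (G : SimpleGraph V)
    [DecidableRel G.Adj] (g h : G.edgeSet → ℝ)
    (hg : g ≠ 0) (hh : h ≠ 0)
    (hgneg : ∀ e, g e = 0 ∨ g e = -1)
    (hhpos : ∀ e, h e = 0 ∨ h e = 1)
    (hdisj : ∀ e f : G.edgeSet, g e ≠ 0 → h f ≠ 0 →
      ∀ w : V, w ∈ (e : Sym2 V) → w ∉ (f : Sym2 V)) :
    IsCircuit G (g + h) := by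
  classical
  set z : G.edgeSet → ℝ := g + h with hzdef
  have hz : ∀ e, z e = g e + h e := fun e => rfl
  have hgh : ∀ e, g e ≠ 0 → h e = 0 := by
    intro e hge
    by_contra hhe
    exact hdisj e e hge hhe _ (Sym2.out_fst_mem (e : Sym2 V)) (Sym2.out_fst_mem _)
  have hhg : ∀ e, h e ≠ 0 → g e = 0 := by
    intro e hhe
    by_contra hge
    exact hdisj e e hge hhe _ (Sym2.out_fst_mem (e : Sym2 V)) (Sym2.out_fst_mem _)
  have hzg : ∀ e, g e ≠ 0 → z e = -1 := by
    intro e hge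
    rcases hgneg e with h0 | hm
    · exact absurd h0 hge
    · rw [hz, hm, hgh e hge, add_zero]
  have hzh : ∀ e, h e ≠ 0 → z e = 1 := by
    intro e hhe
    rcases hhpos e with h0 | hm
    · exact absurd h0 hhe
    · rw [hz, hm, hhg e hhe, zero_add]
  have hz0 : ∀ e, z e ≠ 0 → g e ≠ 0 ∨ h e ≠ 0 := by
    intro e hze
    by_contra hc
    push_neg at hc
    exact hze (by rw [hz, hc.1, hc.2, add_zero])
  have hge : ∃ e, g e ≠ 0 := by
    by_contra hc; push_neg at hc; exact hg (funext fun e => hc e)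
  have hhe : ∃ e, h e ≠ 0 := by
    by_contra hc; push_neg at hc; exact hh (funext fun e => hc e)
  obtain ⟨e₀, he₀⟩ := hge
  obtain ⟨f₀, hf₀⟩ := hhe
  constructor
  · intro h0
    have h1 : z e₀ = 0 := by rw [h0]; rfl
    rw [hzg e₀ he₀] at h1
    norm_num at h1
  intro y hy hss
  have hsub := hss.subset
  set Ue : G.edgeSet → Finset V := fun e => Finset.univ.filter (· ∈ (e : Sym2 V)) with hUe
  have hUeNe : ∀ e, (Ue e).Nonempty := fun e =>
    ⟨(Quot.out ((e : Sym2 V) : Sym2 V)).1, by simp [hUe, Sym2.out_fst_mem]⟩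
  have hpair : ∀ (x : G.edgeSet → ℝ) (e : G.edgeSet), rowSum G x (Ue e) = x e :=
    fun x e => Stmt19Aux.rowSum_pair G x e
  have hsupp : ∀ e, y e ≠ 0 → z e ≠ 0 := by
    intro e hye
    have h1 : Ue e ∈ Bsupp G y := ⟨hUeNe e, by rw [hpair y e]; exact hye⟩
    have h2 := (hsub h1).2
    rwa [hpair z e] at h2
  have hquad : ∀ e f, g e ≠ 0 → h f ≠ 0 → y e + y f = 0 := by
    intro e f hge hhf
    have hef : e ≠ f := by
      rintro rfl
      exact hhf (hgh e hge)
    set U : Finset V := Ue e ∪ Ue f with hU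
    have hmemU : ∀ v, v ∈ U ↔ v ∈ (e : Sym2 V) ∨ v ∈ (f : Sym2 V) := by
      intro v; simp [hU, hUe]
    have hother : ∀ w : G.edgeSet, w ≠ e → w ≠ f → z w ≠ 0 →
        ¬ (∀ v ∈ (w : Sym2 V), v ∈ U) := by
      intro w hwe hwf hzw hall
      rcases hz0 w hzw with hgw | hhw
      · apply hwe
        apply Stmt19Aux.edge_eq G e w
        intro v hv
        rcases (hmemU v).mp (hall v hv) with h1 | h1
        · exact h1
        · exact absurd h1 (hdisj w f hgw hhf v hv)
      · apply hwf
        apply Stmt19Aux.edge_eq G f w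
        intro v hv
        rcases (hmemU v).mp (hall v hv) with h1 | h1
        · exact absurd hv (hdisj e w hge hhw v h1)
        · exact h1
    have hrow : ∀ x : G.edgeSet → ℝ, (∀ w, x w ≠ 0 → z w ≠ 0) →
        rowSum G x U = x e + x f := by
      intro x hx
      have hzero : ∀ w ∈ (Finset.univ : Finset G.edgeSet), w ≠ e ∧ w ≠ f →
          (if ∀ v ∈ (w : Sym2 V), v ∈ U then x w else 0) = 0 := by
        rintro w _ ⟨hwe, hwf⟩
        by_cases hxw : x w = 0
        · simp [hxw]
        · rw [if_neg (hother w hwe hwf (hx w hxw))]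
      unfold rowSum
      rw [Finset.sum_eq_add e f hef hzero
        (fun hc => (hc (Finset.mem_univ e)).elim)
        (fun hc => (hc (Finset.mem_univ f)).elim), if_pos, if_pos]
      · intro v hv; exact (hmemU v).mpr (Or.inr hv)
      · intro v hv; exact (hmemU v).mpr (Or.inl hv)
    have hUne : U.Nonempty := (hUeNe e).mono Finset.subset_union_left
    have hzU : rowSum G z U = 0 := by
      rw [hrow z (fun w hw => hw), hzg e hge, hzh f hhf]; ring
    have hUy : U ∉ Bsupp G y := fun hc => (hsub hc).2 hzU
    have h2 : rowSum G y U = 0 := by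
      by_contra hc
      exact hUy ⟨hUne, hc⟩
    rwa [hrow y hsupp] at h2
  by_cases hα : y e₀ = 0
  · apply hy
    funext e
    show y e = 0
    by_contra hye
    rcases hz0 e (hsupp e hye) with hge | hhe
    · have h1 := hquad e f₀ hge hf₀
      have h2 := hquad e₀ f₀ he₀ hf₀
      apply hye; linarith
    · have h1 := hquad e₀ e he₀ hhe
      apply hye; linarith
  · have hyf₀ : y f₀ = - y e₀ := by
      have := hquad e₀ f₀ he₀ hf₀; linarith
    have hyz : y = fun w => (- y e₀) * z w := by
      funext w
      by_cases hzw : z w = 0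
      · have hyw : y w = 0 := by
          by_contra hc; exact (hsupp w hc) hzw
        rw [hyw, hzw, mul_zero]
      · rcases hz0 w hzw with hgw | hhw
        · have h1 := hquad w f₀ hgw hf₀
          rw [hzg w hgw]; linarith
        · have h1 := hquad e₀ w he₀ hhw
          rw [hzh w hhw]; linarith
    have hBeq : Bsupp G y = Bsupp G z := by
      ext U
      have hr : rowSum G y U = (- y e₀) * rowSum G z U := by
        conv_lhs => rw [hyz]
        exact Stmt19Aux.rowSum_smul G _ z U
      constructor
      · rintro ⟨h1, h2⟩
        refine ⟨h1, fun hc => h2 ?_⟩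
        rw [hr, hc, mul_zero]
      · rintro ⟨h1, h2⟩
        exact ⟨h1, by rw [hr]; exact mul_ne_zero (neg_ne_zero.mpr hα) h2⟩
    exact hss.ne hBeq
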